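/- arXiv:math/0504355 — 6 statements merged into one kernel-verified Lean document; each statement's English description precedes it below -/
import Mathlib

section
/- Let n ≥ 1 and x ≥ 0 be integers, and set y = 2^(n+2) * x + 2^(n+1) - 1. Then for each j with 1 ≤ j ≤ n, the j-th iterate of T applied to y equals 2^(n+2-j) * (3^j * x + (3^j - 1)/2) + 2^(n+1-j) - 1. In particular y < T(y) < T^2(y) < ... < T^n(y). -/
def T (m : ℕ) : ℕ := (3 * m + 1) / 2 ^ (padicValNat 2 (3 * m + 1))

lemma Tstep (k a : ℕ) (hk : 1 ≤ k) :
    T (2 ^ (k + 2) * a + 2 ^ (k + 1) - 1) = 2 ^ (k + 1) * (3 * a + 1) + 2 ^ k - 1 := by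
  have hq : 2 ≤ 2 ^ k := by
    calc (2:ℕ) = 2 ^ 1 := rfl
    _ ≤ 2 ^ k := Nat.pow_le_pow_right (by norm_num) hk
  have h1 : (2:ℕ) ^ (k + 1) = 2 * 2 ^ k := by ring
  have h2 : (2:ℕ) ^ (k + 2) = 4 * 2 ^ k := by ring
  have h3 : 2 ^ (k + 2) * a = 4 * (2 ^ k * a) := by ring
  have h4 : 3 * 2 ^ (k + 1) * a = 6 * (2 ^ k * a) := by ring
  have h5 : 2 ^ (k + 1) * (3 * a + 1) = 6 * (2 ^ k * a) + 2 * 2 ^ k := by ring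
  have hm : 3 * (2 ^ (k + 2) * a + 2 ^ (k + 1) - 1) + 1
      = 2 * (3 * 2 ^ (k + 1) * a + 3 * 2 ^ k - 1) := by omega
  have hNodd : ¬ (2 ∣ (3 * 2 ^ (k + 1) * a + 3 * 2 ^ k - 1)) := by
    obtain ⟨c, hc⟩ : 2 ∣ 2 ^ k := dvd_pow_self 2 (by omega)
    omega
  have hval : padicValNat 2 (3 * (2 ^ (k + 2) * a + 2 ^ (k + 1) - 1) + 1) = 1 := by
    rw [hm, padicValNat.mul (by norm_num) (by omega),
      padicValNat.self (by norm_num), padicValNat.eq_zero_of_not_dvd hNodd]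
  unfold T
  rw [hval, hm]
  omega

lemma half_pow (j : ℕ) : 2 * ((3 ^ j - 1) / 2) = 3 ^ j - 1 := by
  have : Odd ((3:ℕ) ^ j) := Odd.pow ⟨1, by norm_num⟩
  obtain ⟨c, hc⟩ := this
  rw [hc]; omega

lemma step_alg (j x : ℕ) : 3 * (3 ^ j * x + (3 ^ j - 1) / 2) + 1
    = 3 ^ (j + 1) * x + (3 ^ (j + 1) - 1) / 2 := by
  have h1 := half_pow j
  have h2 := half_pow (j + 1)
  have h3 : (3:ℕ) ^ (j + 1) = 3 * 3 ^ j := by ring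
  have h4 : 1 ≤ (3:ℕ) ^ j := Nat.one_le_pow _ _ (by norm_num)
  have h5 : 3 ^ (j + 1) * x = 3 * (3 ^ j * x) := by ring
  omega

theorem stmt_4 (n x : ℕ) (hn : 1 ≤ n) (y : ℕ) (hy : y = 2 ^ (n + 2) * x + 2 ^ (n + 1) - 1) :
    (∀ j, 1 ≤ j → j ≤ n →
      T^[j] y = 2 ^ (n + 2 - j) * (3 ^ j * x + (3 ^ j - 1) / 2) + 2 ^ (n + 1 - j) - 1) ∧
    (∀ j, j < n → T^[j] y < T^[j + 1] y) := by
  have key : ∀ j, j ≤ n →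
      T^[j] y = 2 ^ (n + 2 - j) * (3 ^ j * x + (3 ^ j - 1) / 2) + 2 ^ (n + 1 - j) - 1 := by
    intro j
    induction j with
    | zero => intro _; simpa using hy
    | succ j ih =>
      intro hjn
      have hj : j ≤ n := by omega
      have hprev := ih hj
      rw [Function.iterate_succ_apply', hprev]
      have hk : 1 ≤ n - j := by omega
      have e1 : n + 2 - j = (n - j) + 2 := by omega
      have e2 : n + 1 - j = (n - j) + 1 := by omega
      have e3 : n + 2 - (j + 1) = (n - j) + 1 := by omega
      have e4 : n + 1 - (j + 1) = n - j := by omega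
      rw [e1, e2, e3, e4, Tstep (n - j) _ hk, step_alg]
  constructor
  · intro j _ hjn; exact key j hjn
  · intro j hjn
    have h1 := key j (by omega)
    have h2 := key (j + 1) (by omega)
    rw [h1, h2]
    have e1 : n + 2 - j = (n - j) + 2 := by omega
    have e2 : n + 1 - j = (n - j) + 1 := by omega
    have e3 : n + 2 - (j + 1) = (n - j) + 1 := by omega
    have e4 : n + 1 - (j + 1) = n - j := by omega
    rw [e1, e2, e3, e4, ← step_alg]
    set p := 2 ^ (n - j) with hp
    have hp1 : 1 ≤ p := Nat.one_le_pow _ _ (by norm_num)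
    set A := 3 ^ j * x + (3 ^ j - 1) / 2 with hA
    have eb : (2:ℕ) ^ ((n - j) + 2) = 4 * p := by rw [hp]; ring
    have ec : (2:ℕ) ^ ((n - j) + 1) = 2 * p := by rw [hp]; ring
    have ed : 4 * p * A = 4 * (p * A) := by ring
    have ee : 2 * p * (3 * A + 1) = 6 * (p * A) + 2 * p := by ring
    rw [eb, ec]
    omega
end

section
/- Let n ≥ 1 and x ≥ 0 with y = 2^(n+2) * x + 2^(n+1) - 1. Then T^(n+1)(y) < T^n(y). -/
lemma T_step (k c : ℕ) (hk : 2 ≤ k) (hc : Odd c) :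
    T (2 ^ k * c - 1) = 2 ^ (k - 1) * (3 * c) - 1 := by
  have hc1 : 1 ≤ c := hc.pos
  have hk1 : k - 1 + 1 = k := by omega
  have hpow : 2 ≤ 2 ^ (k - 1) := by
    calc 2 = 2 ^ 1 := rfl
    _ ≤ 2 ^ (k - 1) := Nat.pow_le_pow_right (by norm_num) (by omega)
  have hAc : 1 ≤ 2 ^ (k - 1) * c := Nat.one_le_iff_ne_zero.mpr (by positivity)
  have h2 : 2 ^ (k-1) * (3 * c) ≥ 2 := by nlinarith
  have key : 3 * (2 ^ k * c - 1) + 1 = 2 * (2 ^ (k - 1) * (3 * c) - 1) := by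
    have h0 : 2 ^ k = 2 * 2 ^ (k-1) := by
      conv_lhs => rw [← hk1]
      rw [pow_succ]; ring
    have e1 : 2 ^ (k-1) * (3 * c) = 3 * (2 ^ (k-1) * c) := by ring
    have e2 : 2 * 2 ^ (k-1) * c = 2 * (2 ^ (k-1) * c) := by ring
    rw [h0, e1, e2]
    omega
  have hodd : Odd (2 ^ (k - 1) * (3 * c) - 1) := by
    have h2dvd : 2 ∣ 2 ^ (k-1) * (3*c) := Dvd.dvd.mul_right (dvd_pow_self 2 (by omega)) _
    rcases h2dvd with ⟨t, ht⟩
    exact ⟨t - 1, by omega⟩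
  have hval : padicValNat 2 (3 * (2 ^ k * c - 1) + 1) = 1 := by
    rw [key]
    have ha : (2 ^ (k - 1) * (3 * c) - 1) ≠ 0 := by omega
    rw [padicValNat.mul (by norm_num) ha, padicValNat.self (by norm_num),
      padicValNat.eq_zero_of_not_dvd (by rwa [Nat.two_dvd_ne_zero, ← Nat.odd_iff])]
  rw [T, hval, key, pow_one, Nat.mul_div_cancel_left _ (by norm_num)]

lemma T_last (M : ℕ) (hM : Odd M) (h3 : 3 ≤ M) : T (2 * M - 1) < 2 * M - 1 := by
  have key : 3 * (2 * M - 1) + 1 = 6 * M - 2 := by omega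
  obtain ⟨t, ht⟩ := hM
  have h4 : (2:ℕ) ^ 2 ∣ 6 * M - 2 := ⟨3 * t + 1, by omega⟩
  have hne : 6 * M - 2 ≠ 0 := by omega
  have hv : 2 ≤ padicValNat 2 (6 * M - 2) :=
    (padicValNat_dvd_iff_le hne).mp h4
  have hle : (6 * M - 2) / 2 ^ padicValNat 2 (6 * M - 2) ≤ (6 * M - 2) / 4 :=
    Nat.div_le_div_left
      (by calc (4:ℕ) = 2 ^ 2 := rfl
          _ ≤ 2 ^ padicValNat 2 (6 * M - 2) := Nat.pow_le_pow_right (by norm_num) hv)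
      (by norm_num)
  rw [T, key]
  omega

theorem stmt_6 (n x : ℕ) (hn : 1 ≤ n) (y : ℕ) (hy : y = 2 ^ (n + 2) * x + 2 ^ (n + 1) - 1) :
    T^[n + 1] y < T^[n] y := by
  have hiter : ∀ j, j ≤ n → T^[j] y = 2 ^ (n + 1 - j) * (3 ^ j * (2 * x + 1)) - 1 := by
    intro j
    induction j with
    | zero =>
      intro _
      simp only [Function.iterate_zero, id_eq, hy, Nat.sub_zero, pow_zero, one_mul]
      congr 1
      rw [pow_succ]
      ring
    | succ j ih =>
      intro hj
      rw [Function.iterate_succ_apply', ih (by omega),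
        T_step (n + 1 - j) (3 ^ j * (2 * x + 1)) (by omega)
          (Odd.mul (Odd.pow ⟨1, rfl⟩) ⟨x, rfl⟩),
        show n + 1 - j - 1 = n + 1 - (j + 1) from by omega]
      congr 2
      ring
  have hn' := hiter n le_rfl
  rw [show n + 1 - n = 1 from by omega, pow_one] at hn'
  have hM : Odd (3 ^ n * (2 * x + 1)) := Odd.mul (Odd.pow ⟨1, rfl⟩) ⟨x, rfl⟩
  have h3 : 3 ≤ 3 ^ n * (2 * x + 1) := by
    have : 3 ≤ 3 ^ n := by calc (3:ℕ) = 3 ^ 1 := rfl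
                             _ ≤ 3 ^ n := Nat.pow_le_pow_right (by norm_num) hn
    nlinarith
  rw [Function.iterate_succ_apply', hn']
  exact T_last _ hM h3
end

section
/- For every positive integer n there exists an odd positive integer y such that the trajectory under T strictly increases for n consecutive steps: y < T(y) < T^2(y) < ... < T^n(y). -/
lemma T_form (s k : ℕ) (hs : 0 < s) (hk : 2 ≤ k) :
    T (2 ^ k * s - 1) = 2 ^ (k - 1) * (3 * s) - 1 := by
  have hA : 0 < 2 ^ (k - 1) * s := by positivity
  have hksplit : 2 ^ k = 2 * 2 ^ (k - 1) := by
    rw [← pow_succ']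
    congr 1
    omega
  have h1 : 3 * (2 ^ k * s - 1) + 1 = 2 * (2 ^ (k - 1) * (3 * s) - 1) := by
    have h2 : 2 ^ (k - 1) * (3 * s) = 3 * (2 ^ (k - 1) * s) := by ring
    have h3 : 2 ^ k * s = 2 * (2 ^ (k - 1) * s) := by rw [hksplit]; ring
    rw [h2, h3]
    omega
  have hdodd : Odd (2 ^ (k - 1) * (3 * s) - 1) := by
    have heven : 2 ∣ 2 ^ (k - 1) := dvd_pow_self 2 (by omega)
    obtain ⟨c, hc⟩ := heven
    refine ⟨c * (3 * s) - 1, ?_⟩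
    have hc3 : 0 < c * (3 * s) := by
      have hc0 : c ≠ 0 := by rintro rfl; simp at hc
      positivity
    rw [hc]
    have : 2 * c * (3 * s) = 2 * (c * (3 * s)) := by ring
    omega
  have hval : padicValNat 2 (3 * (2 ^ k * s - 1) + 1) = 1 := by
    rw [h1]
    have hd0 : 2 ^ (k - 1) * (3 * s) - 1 ≠ 0 := by
      rcases hdodd with ⟨c, hc⟩
      omega
    have hv2 : padicValNat 2 (2 ^ (k - 1) * (3 * s) - 1) = 0 :=
      padicValNat.eq_zero_of_not_dvd (by
        rw [Nat.two_dvd_ne_zero]; exact Nat.odd_iff.mp hdodd)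
    rw [padicValNat.mul two_ne_zero hd0, hv2, padicValNat.self (by norm_num)]
  unfold T
  rw [hval, h1]
  simp [Nat.mul_div_cancel_left]

theorem stmt_7 (n : ℕ) (hn : 1 ≤ n) :
    ∃ y : ℕ, Odd y ∧ 0 < y ∧ ∀ j, j < n → T^[j] y < T^[j + 1] y := by
  refine ⟨2 ^ (n + 1) - 1, ?_, ?_, ?_⟩
  · refine ⟨2 ^ n - 1, ?_⟩
    have h1 : 2 ^ (n + 1) = 2 * 2 ^ n := by rw [pow_succ]; ring
    have h2 : 0 < 2 ^ n := Nat.pow_pos (by norm_num)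
    omega
  · have h2 : 2 ≤ 2 ^ (n + 1) := by
      calc 2 = 2 ^ 1 := rfl
      _ ≤ 2 ^ (n + 1) := Nat.pow_le_pow_right (by norm_num) (by omega)
    omega
  · have key : ∀ j, j ≤ n → T^[j] (2 ^ (n + 1) - 1) = 3 ^ j * 2 ^ (n + 1 - j) - 1 := by
      intro j
      induction j with
      | zero => intro _; simp
      | succ j ih =>
        intro hj
        have hj' : j ≤ n := by omega
        rw [Function.iterate_succ_apply', ih hj']
        have hcomm : 3 ^ j * 2 ^ (n + 1 - j) = 2 ^ (n + 1 - j) * 3 ^ j := by ring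
        rw [hcomm, T_form (3 ^ j) (n + 1 - j) (by positivity) (by omega)]
        have h1 : n + 1 - j - 1 = n + 1 - (j + 1) := by omega
        rw [h1]
        congr 1
        rw [pow_succ]
        ring
    intro j hj
    rw [key j (by omega), key (j + 1) (by omega)]
    have h1 : n + 1 - j = (n + 1 - (j + 1)) + 1 := by omega
    have hlt : 3 ^ j * 2 ^ (n + 1 - j) < 3 ^ (j + 1) * 2 ^ (n + 1 - (j + 1)) := by
      rw [h1, pow_succ, pow_succ]
      have h2 : 0 < 3 ^ j * 2 ^ (n + 1 - (j + 1)) := by positivity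
      calc 3 ^ j * (2 ^ (n + 1 - (j + 1)) * 2) = (3 ^ j * 2 ^ (n + 1 - (j + 1))) * 2 := by ring
        _ < (3 ^ j * 2 ^ (n + 1 - (j + 1))) * 3 := by
            exact (Nat.mul_lt_mul_left h2).mpr (by norm_num)
        _ = 3 ^ j * 3 * 2 ^ (n + 1 - (j + 1)) := by ring
    have hpos : 0 < 3 ^ j * 2 ^ (n + 1 - j) := by positivity
    omega
end

section
/- For every odd positive integer y and every n ≥ 1, letting z = 4^n * y + (4^n - 1)/3, we have T(z) = T(y). -/
theorem stmt_9 (y n : ℕ) (hy : Odd y) (hy0 : 0 < y) (hn : 1 ≤ n) :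
    T (4 ^ n * y + (4 ^ n - 1) / 3) = T y := by
  have hd : 3 ∣ 4 ^ n - 1 := by
    have h : (4:ℕ) ^ n ≡ 1 [MOD 3] := by
      calc (4:ℕ) ^ n ≡ 1 ^ n [MOD 3] := Nat.ModEq.pow n (by decide)
        _ = 1 := one_pow n
    exact (Nat.modEq_iff_dvd' (Nat.one_le_pow _ _ (by norm_num))).mp h.symm
  have h1 : (1:ℕ) ≤ 4 ^ n := Nat.one_le_pow _ _ (by norm_num)
  have hkey : 3 * (4 ^ n * y + (4 ^ n - 1) / 3) + 1 = 2 ^ (2 * n) * (3 * y + 1) := by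
    have := Nat.mul_div_cancel' hd
    have h4 : (4:ℕ) ^ n = 2 ^ (2 * n) := by
      rw [pow_mul]; norm_num
    have h5 : (4:ℕ) ^ n * (3 * y + 1) = 3 * (4 ^ n * y) + 4 ^ n := by ring
    rw [Nat.mul_add, this, ← h4, h5]
    omega
  have hpos : 0 < 3 * y + 1 := by omega
  have hv : padicValNat 2 (3 * (4 ^ n * y + (4 ^ n - 1) / 3) + 1)
      = 2 * n + padicValNat 2 (3 * y + 1) := by
    rw [hkey, padicValNat.mul (by positivity) (by omega), padicValNat.prime_pow]
  unfold T
  rw [hv, hkey, pow_add, Nat.mul_div_mul_left _ _ (by positivity)]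
end

section
/- If the trajectory of an odd positive integer y under T eventually reaches 1, then for every n ≥ 1 the trajectory of z = 4^n * y + (4^n - 1)/3 under T also eventually reaches 1. -/
lemma T_four_mul_add_one (m : ℕ) : T (4 * m + 1) = T m := by
  unfold T
  have h1 : 3 * (4 * m + 1) + 1 = 2 ^ 2 * (3 * m + 1) := by ring
  rw [h1]
  have ha : (3 * m + 1) ≠ 0 := by omega
  have h2 : padicValNat 2 (2 ^ 2 * (3 * m + 1))
      = 2 + padicValNat 2 (3 * m + 1) := by
    rw [padicValNat.mul (by positivity) ha, padicValNat.prime_pow]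
  rw [h2, pow_add, Nat.mul_div_mul_left _ _ (by positivity)]

lemma pow4_div (n : ℕ) : (4 ^ (n + 1) - 1) / 3 = 4 * ((4 ^ n - 1) / 3) + 1 := by
  obtain ⟨c, hc⟩ := Nat.sub_dvd_pow_sub_pow 4 1 n
  simp only [one_pow] at hc
  have h1 : 1 ≤ 4 ^ n := Nat.one_le_pow _ _ (by norm_num)
  have h2 : 4 ^ (n + 1) = 4 * 4 ^ n := by ring
  omega

lemma T_z (y : ℕ) : ∀ n, 1 ≤ n → T (4 ^ n * y + (4 ^ n - 1) / 3) = T y := by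
  intro n
  induction n with
  | zero => omega
  | succ m ih =>
    intro _
    rcases Nat.eq_or_lt_of_le (Nat.one_le_iff_ne_zero.mpr (Nat.succ_ne_zero m)) with h | h
    · have hm0 : m = 0 := by omega
      subst hm0
      norm_num [T_four_mul_add_one]
    · have hm : 1 ≤ m := by omega
      have : 4 ^ (m + 1) * y + (4 ^ (m + 1) - 1) / 3
          = 4 * (4 ^ m * y + (4 ^ m - 1) / 3) + 1 := by
        rw [pow4_div]; ring
      rw [this, T_four_mul_add_one, ih hm]

theorem stmt_11 (y n : ℕ) (hy : Odd y) (hy0 : 0 < y) (hn : 1 ≤ n)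
    (h : ∃ k, T^[k] y = 1) :
    ∃ k, T^[k] (4 ^ n * y + (4 ^ n - 1) / 3) = 1 := by
  obtain ⟨k, hk⟩ := h
  have hT1 : T 1 = 1 := by
    have h4 : (3 * 1 + 1 : ℕ) = 2 ^ 2 := by norm_num
    unfold T
    rw [h4, padicValNat.prime_pow]
    norm_num
  rcases Nat.eq_zero_or_pos k with rfl | hk0
  · refine ⟨1, ?_⟩
    simp only [Function.iterate_one, T_z y n hn]
    simp only [Function.iterate_zero, id_eq] at hk
    rw [hk, hT1]
  · refine ⟨k, ?_⟩
    obtain ⟨j, rfl⟩ := Nat.exists_eq_succ_of_ne_zero (Nat.pos_iff_ne_zero.mp hk0)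
    rw [Function.iterate_succ_apply, T_z y n hn, ← Function.iterate_succ_apply]
    exact hk
end

section
/- Suppose x is an odd positive integer such that 3^(k+1) * x = 2^(n_{k+1}) - (3^k * 2^0 + 3^(k-1) * 2^(n_1) + ... + 3^0 * 2^(n_k)) for some strictly increasing sequence 0 < n_1 < n_2 < ... < n_{k+1} of positive integers. Then the trajectory of x under the accelerated map T reaches 1 (in at most k+1 steps). -/
lemma T_eq (x a q : ℕ) (hq : Odd q) (h : 3 * x + 1 = 2 ^ a * q) : T x = q := by
  have hq0 : q ≠ 0 := by rintro rfl; simp at hq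
  have hqv : padicValNat 2 q = 0 :=
    padicValNat.eq_zero_of_not_dvd (by
      rw [Nat.two_dvd_ne_zero, Nat.odd_iff.mp hq])
  have hv : padicValNat 2 (3 * x + 1) = a := by
    rw [h, padicValNat.mul (by positivity) hq0, hqv,
      padicValNat.prime_pow, Nat.add_zero]
  rw [T, hv, h, Nat.mul_div_cancel_left _ (by positivity)]

lemma key : ∀ k x (n : ℕ → ℕ), Odd x → n 0 = 0 →
    (∀ i j, i < j → j ≤ k + 1 → n i < n j) →
    3 ^ (k + 1) * x + (Finset.range (k + 1)).sum (fun j => 3 ^ (k - j) * 2 ^ (n j))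
      = 2 ^ (n (k + 1)) →
    T^[k + 1] x = 1 := by
  intro k
  induction k with
  | zero =>
    intro x n hx hn0 hmono hrep
    simp [hn0] at hrep
    have : T x = 1 := T_eq x (n 1) 1 odd_one (by rw [mul_one]; omega)
    simpa using this
  | succ k ih =>
    intro x n hx hn0 hmono hrep
    have hn1 : ∀ j, 1 ≤ j → j ≤ k + 2 → n 1 ≤ n j := by
      intro j h1 h2
      rcases eq_or_lt_of_le h1 with h | h
      · exact h ▸ le_rfl
      · exact (hmono 1 j h h2).le
    have hn1lt : ∀ j, 1 < j → j ≤ k + 2 → n 1 < n j := fun j h1 h2 => hmono 1 j h1 h2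
    set S : ℕ := (Finset.range (k + 1)).sum (fun j => 3 ^ (k - j) * 2 ^ (n (j + 1))) with hS
    have hshift : (Finset.range (k + 2)).sum (fun j => 3 ^ (k + 1 - j) * 2 ^ (n j))
        = S + 3 ^ (k + 1) := by
      rw [Finset.sum_range_succ' (fun j => 3 ^ (k + 1 - j) * 2 ^ (n j)) (k + 1), hn0, hS]
      congr 1
      · refine Finset.sum_congr rfl fun j _ => ?_
        congr 2
        omega
      · norm_num
    have hrep' : 3 ^ (k + 1) * (3 * x + 1) + S = 2 ^ (n (k + 2)) := by
      rw [← hrep, hshift]; ring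
    have hdvdS : 2 ^ (n 1) ∣ S := by
      refine Finset.dvd_sum fun j hj => Dvd.dvd.mul_left ?_ _
      exact pow_dvd_pow 2 (hn1 (j + 1) (by omega) (by simp at hj; omega))
    have hdvdR : 2 ^ (n 1) ∣ 2 ^ (n (k + 2)) :=
      pow_dvd_pow 2 (hn1 (k + 2) (by omega) le_rfl)
    have hdvdA : 2 ^ (n 1) ∣ 3 ^ (k + 1) * (3 * x + 1) := by
      have h1 : 3 ^ (k + 1) * (3 * x + 1) = 2 ^ (n (k + 2)) - S :=
        Nat.eq_sub_of_add_eq hrep'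
      rw [h1]; exact Nat.dvd_sub hdvdR hdvdS
    have hcop : Nat.Coprime (2 ^ (n 1)) (3 ^ (k + 1)) :=
      (by norm_num : Nat.Coprime 2 3).pow _ _
    have hdvdx : 2 ^ (n 1) ∣ 3 * x + 1 := hcop.dvd_of_dvd_mul_left hdvdA
    set q : ℕ := (3 * x + 1) / 2 ^ (n 1) with hqdef
    have hq : 2 ^ (n 1) * q = 3 * x + 1 := Nat.mul_div_cancel' hdvdx
    have E : 3 ^ (k + 1) * q
        + (Finset.range (k + 1)).sum (fun j => 3 ^ (k - j) * 2 ^ (n (j + 1) - n 1))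
        = 2 ^ (n (k + 2) - n 1) := by
      apply Nat.eq_of_mul_eq_mul_left (show 0 < 2 ^ (n 1) by positivity)
      rw [mul_add, Finset.mul_sum]
      have h1 : 2 ^ (n 1) * (3 ^ (k + 1) * q) = 3 ^ (k + 1) * (3 * x + 1) := by
        rw [← hq]; ring
      have h2 : ∀ j ∈ Finset.range (k + 1),
          2 ^ (n 1) * (3 ^ (k - j) * 2 ^ (n (j + 1) - n 1)) = 3 ^ (k - j) * 2 ^ (n (j + 1)) := by
        intro j hj
        have hle : n 1 ≤ n (j + 1) := hn1 (j + 1) (by omega) (by simp at hj; omega)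
        have he : n 1 + (n (j + 1) - n 1) = n (j + 1) := by omega
        calc 2 ^ (n 1) * (3 ^ (k - j) * 2 ^ (n (j + 1) - n 1))
            = 3 ^ (k - j) * 2 ^ (n 1 + (n (j + 1) - n 1)) := by ring
          _ = 3 ^ (k - j) * 2 ^ (n (j + 1)) := by rw [he]
      have h3 : 2 ^ (n 1) * 2 ^ (n (k + 2) - n 1) = 2 ^ (n (k + 2)) := by
        rw [← pow_add]
        congr 1
        have := hn1 (k + 2) (by omega) le_rfl
        omega
      rw [Finset.sum_congr rfl h2, h1, h3, hrep']
    -- q is odd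
    have hqodd : Odd q := by
      have E2 := E
      rw [Finset.sum_range_succ' (fun j => 3 ^ (k - j) * 2 ^ (n (j + 1) - n 1)) k] at E2
      have e0 : 3 ^ (k - 0) * 2 ^ (n (0 + 1) - n 1) = 3 ^ k := by simp
      rw [e0] at E2
      have hB : 2 ∣ (Finset.range k).sum (fun j => 3 ^ (k - (j + 1)) * 2 ^ (n (j + 1 + 1) - n 1)) := by
        refine Finset.dvd_sum fun j hj => Dvd.dvd.mul_left ?_ _
        have : n 1 < n (j + 1 + 1) := hn1lt (j + 1 + 1) (by omega) (by simp at hj; omega)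
        exact dvd_pow_self 2 (by omega)
      have hR : 2 ∣ 2 ^ (n (k + 2) - n 1) := by
        have : n 1 < n (k + 2) := hn1lt (k + 2) (by omega) le_rfl
        exact dvd_pow_self 2 (by omega)
      have h3 : 3 ^ k % 2 = 1 := Nat.odd_iff.mp (Odd.pow (by decide : Odd 3))
      rw [Nat.odd_iff]
      by_contra h
      have hq2 : 2 ∣ q := by omega
      have : 2 ∣ 3 ^ (k + 1) * q := hq2.mul_left _
      omega
    have hTx : T x = q := T_eq x (n 1) q hqodd hq.symm
    have hih := ih q (fun j => n (j + 1) - n 1) hqodd (by simp)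
      (fun i j hij hjk => by
        show n (i + 1) - n 1 < n (j + 1) - n 1
        have h1 := hmono (i + 1) (j + 1) (by omega) (by omega)
        have h2 := hn1 (i + 1) (by omega) (by omega)
        omega) E
    rw [show k + 1 + 1 = (k + 1) + 1 from rfl, Function.iterate_succ_apply, hTx]
    exact hih

theorem stmt_14 (x k : ℕ) (hx : Odd x) (hx0 : 0 < x) (n : ℕ → ℕ)
    (hn0 : n 0 = 0)
    (hmono : ∀ i j, i < j → j ≤ k + 1 → n i < n j)
    (hrep : 3 ^ (k + 1) * x + (Finset.range (k + 1)).sum (fun j => 3 ^ (k - j) * 2 ^ (n j))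
      = 2 ^ (n (k + 1))) :
    ∃ m, m ≤ k + 1 ∧ T^[m] x = 1 :=
  ⟨k + 1, le_rfl, key k x n hx hn0 hmono hrep⟩
end
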